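/- Every cyclic continuous linear operator on φ (the countable direct sum of copies of the scalar field with the strongest locally convex topology) is similar to the multiplication operator M on the polynomial space K[z], Mp(z) = z·p(z). Conversely M is cyclic. -/

import Mathlib

/-- Every cyclic continuous linear operator on `φ` is similar to the multiplication
operator `M` on `K[z]`, `Mp(z) = z·p(z)`; conversely `M` is cyclic. Here `φ` is
identified with the polynomial space `K[z]`; in `φ` every linear subspace is closed,
so dense span means span equals everything, every linear map is continuous, and a
linear homeomorphism is the same as a linear equivalence. -/
theorem stmt_13 (𝕜 : Type*) [RCLike 𝕜] (T : Module.End 𝕜 (Polynomial 𝕜)) :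
    (∃ x : Polynomial 𝕜, Submodule.span 𝕜 {y : Polynomial 𝕜 | ∃ n : ℕ, y = (T ^ n) x} = ⊤) ↔
      ∃ J : Polynomial 𝕜 ≃ₗ[𝕜] Polynomial 𝕜,
        ∀ p : Polynomial 𝕜, T p = J (Polynomial.X * J.symm p) := by
  classical
  constructor
  · rintro ⟨x, hx⟩
    set L : Polynomial 𝕜 →ₗ[𝕜] Polynomial 𝕜 :=
      { toFun := fun p => Polynomial.aeval T p x
        map_add' := fun p q => by simp
        map_smul' := fun c p => by simp } with hL
    have hLpow : ∀ n : ℕ, L (Polynomial.X ^ n) = (T ^ n) x := by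
      intro n
      simp [hL, map_pow]
    have hLmul : ∀ n : ℕ, ∀ p, L (Polynomial.X ^ n * p) = (T ^ n) (L p) := by
      intro n p
      simp only [hL, LinearMap.coe_mk, AddHom.coe_mk, map_mul, map_pow, Polynomial.aeval_X,
        Module.End.mul_apply]
    have hsurj : Function.Surjective L := by
      rw [← LinearMap.range_eq_top, ← top_le_iff, ← hx, Submodule.span_le]
      rintro y ⟨n, rfl⟩
      exact ⟨Polynomial.X ^ n, hLpow n⟩
    have hinj : Function.Injective L := by
      rw [← LinearMap.ker_eq_bot]
      by_contra hne
      obtain ⟨f, hfker, hf0⟩ := (Submodule.ne_bot_iff _).1 hne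
      -- normalize to a monic polynomial in the kernel
      set g : Polynomial 𝕜 := f * Polynomial.C f.leadingCoeff⁻¹ with hg
      have hgm : g.Monic := Polynomial.monic_mul_leadingCoeff_inv hf0
      have hgker : L g = 0 := by
        have : g = f.leadingCoeff⁻¹ • f := by
          rw [hg, Polynomial.smul_eq_C_mul, mul_comm]
        rw [this, map_smul, LinearMap.mem_ker.1 hfker, smul_zero]
      have hgq : ∀ q, L (g * q) = 0 := by
        intro q
        induction q using Polynomial.induction_on' with
        | add p q hp hq => rw [mul_add, map_add, hp, hq, add_zero]
        | monomial n a =>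
          have h2 : g * Polynomial.monomial n a = a • (Polynomial.X ^ n * g) := by
            rw [← Polynomial.C_mul_X_pow_eq_monomial, ← Polynomial.smul_eq_C_mul]
            simp [mul_smul_comm, smul_mul_assoc, mul_comm]
          rw [h2, map_smul, hLmul, hgker, map_zero, smul_zero]
      -- everything is the image of a polynomial of degree < natDegree g
      set n := g.natDegree with hn
      have htop : (⊤ : Submodule 𝕜 (Polynomial 𝕜)) ≤
          Submodule.map L (Polynomial.degreeLT 𝕜 n) := by
        intro p _
        obtain ⟨q, rfl⟩ := hsurj p
        refine ⟨q %ₘ g, Polynomial.mem_degreeLT.2 ?_, ?_⟩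
        · rw [hn, ← Polynomial.degree_eq_natDegree hgm.ne_zero]
          exact Polynomial.degree_modByMonic_lt q hgm
        · conv_rhs => rw [← Polynomial.modByMonic_add_div q g]
          rw [map_add, hgq, add_zero]
      have hfg : (⊤ : Submodule 𝕜 (Polynomial 𝕜)).FG := by
        have h3 : Submodule.map L (Polynomial.degreeLT 𝕜 n) = ⊤ := le_antisymm le_top htop
        rw [← h3]
        refine Submodule.FG.map _ ⟨(Finset.range n).image fun k => Polynomial.X ^ k, ?_⟩
        exact Polynomial.degreeLT_eq_span_X_pow.symm
      have : Module.Finite 𝕜 (Polynomial 𝕜) := Module.finite_def.2 hfg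
      exact Polynomial.not_finite this
    refine ⟨LinearEquiv.ofBijective L ⟨hinj, hsurj⟩, fun p => ?_⟩
    set J := LinearEquiv.ofBijective L ⟨hinj, hsurj⟩ with hJ
    have h1 : J (Polynomial.X * J.symm p) = L (Polynomial.X ^ 1 * J.symm p) := by
      rw [pow_one]; rfl
    rw [h1, hLmul, pow_one]
    rw [show L (J.symm p) = J (J.symm p) from rfl, J.apply_symm_apply]
  · rintro ⟨J, hJ⟩
    refine ⟨J 1, ?_⟩
    have hpow : ∀ n : ℕ, (T ^ n) (J 1) = J (Polynomial.X ^ n) := by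
      intro n
      induction n with
      | zero => simp
      | succ n ih =>
        rw [pow_succ', Module.End.mul_apply, ih, hJ, J.symm_apply_apply, ← pow_succ']
    rw [eq_top_iff]
    intro p _
    have hp : J.symm p ∈
        Submodule.span 𝕜 (Set.range fun n : ℕ => (Polynomial.X : Polynomial 𝕜) ^ n) := by
      induction (J.symm p) using Polynomial.induction_on' with
      | add r s hr hs => exact Submodule.add_mem _ hr hs
      | monomial n a =>
        rw [← Polynomial.C_mul_X_pow_eq_monomial, ← Polynomial.smul_eq_C_mul]
        exact Submodule.smul_mem _ _ (Submodule.subset_span ⟨n, rfl⟩)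
    have hmem := Submodule.mem_map_of_mem (f := (J : Polynomial 𝕜 →ₗ[𝕜] Polynomial 𝕜)) hp
    rw [Submodule.map_span, ← Set.range_comp] at hmem
    rw [show (J : Polynomial 𝕜 →ₗ[𝕜] Polynomial 𝕜) (J.symm p) = p from J.apply_symm_apply p]
      at hmem
    refine Submodule.span_mono ?_ hmem
    rintro y ⟨n, rfl⟩
    exact ⟨n, by simp [hpow n]⟩
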